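/- If the series Σ x_k of real numbers statistically converges to some s ∈ ℝ, then there exists a strictly increasing sequence of indices (n_k) such that x_{n_k} → 0 as k → ∞. -/

import Mathlib

open Filter Topology

/-- A set `A ⊆ ℕ` is negligible if its natural density is zero. -/
def Negligible (A : Set ℕ) : Prop :=
  Tendsto (fun n : ℕ => ((A ∩ Set.Iio n).ncard : ℝ) / n) atTop (nhds 0)

/-- A sequence of reals statistically converges to `a`. -/
def StatTendsto (s : ℕ → ℝ) (a : ℝ) : Prop :=
  ∀ ε : ℝ, ε > 0 → Negligible {n : ℕ | |s n - a| > ε}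

lemma aux_fin (C : Set ℕ) (n : ℕ) : (C ∩ Set.Iio n).Finite :=
  (Set.finite_Iio n).inter_of_right C

lemma negligible_union {A B : Set ℕ} (hA : Negligible A) (hB : Negligible B) :
    Negligible (A ∪ B) := by
  refine squeeze_zero (g := fun n : ℕ =>
      ((A ∩ Set.Iio n).ncard : ℝ) / n + ((B ∩ Set.Iio n).ncard : ℝ) / n)
    (fun n => by positivity) (fun n => ?_)
    (by simpa using hA.add hB)
  rw [← add_div]
  apply div_le_div_of_nonneg_right ?_ (by positivity)
  rw [← Nat.cast_add, Nat.cast_le, Set.union_inter_distrib_right]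
  exact Set.ncard_union_le _ _

lemma negligible_shift {A : Set ℕ} (hA : Negligible A) :
    Negligible {n : ℕ | n + 1 ∈ A} := by
  refine squeeze_zero (g := fun n : ℕ =>
      ((A ∩ Set.Iio n).ncard : ℝ) / n + 1 / n)
    (fun n => by positivity) (fun n => ?_)
    (by simpa using hA.add tendsto_one_div_atTop_nhds_zero_nat)
  rw [← add_div]
  apply div_le_div_of_nonneg_right ?_ (by positivity)
  have h1 : ({n' : ℕ | n' + 1 ∈ A} ∩ Set.Iio n).ncard ≤ (A ∩ Set.Iio (n + 1)).ncard := by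
    have himg : (fun m => m + 1) '' ({n' : ℕ | n' + 1 ∈ A} ∩ Set.Iio n) ⊆
        A ∩ Set.Iio (n + 1) := by
      rintro m ⟨m', ⟨hm'A, hm'lt⟩, rfl⟩
      exact ⟨hm'A, by simpa using hm'lt⟩
    calc ({n' : ℕ | n' + 1 ∈ A} ∩ Set.Iio n).ncard
        = ((fun m => m + 1) '' ({n' : ℕ | n' + 1 ∈ A} ∩ Set.Iio n)).ncard :=
          (Set.ncard_image_of_injective _ (add_left_injective 1)).symm
      _ ≤ (A ∩ Set.Iio (n + 1)).ncard :=
          Set.ncard_le_ncard himg (aux_fin A (n + 1))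
  have h2 : (A ∩ Set.Iio (n + 1)).ncard ≤ (A ∩ Set.Iio n).ncard + 1 := by
    have hsub : A ∩ Set.Iio (n + 1) ⊆ insert n (A ∩ Set.Iio n) := by
      rintro m ⟨hmA, hmlt⟩
      rcases Nat.lt_succ_iff_lt_or_eq.mp hmlt with h | h
      · exact Set.mem_insert_of_mem _ ⟨hmA, h⟩
      · exact h ▸ Set.mem_insert _ _
    calc (A ∩ Set.Iio (n + 1)).ncard ≤ (insert n (A ∩ Set.Iio n)).ncard :=
          Set.ncard_le_ncard hsub ((aux_fin A n).insert n)
      _ ≤ (A ∩ Set.Iio n).ncard + 1 := Set.ncard_insert_le _ _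
  push_cast
  exact_mod_cast h1.trans h2

lemma negligible_compl_infinite {A : Set ℕ} (hA : Negligible A) : Aᶜ.Infinite := by
  by_contra hfin
  rw [Set.not_infinite] at hfin
  set C : ℕ := Aᶜ.ncard with hC
  have hge : ∀ n : ℕ, (n : ℝ) - C ≤ ((A ∩ Set.Iio n).ncard : ℝ) := by
    intro n
    have hsub : Set.Iio n ⊆ (A ∩ Set.Iio n) ∪ Aᶜ := by
      intro m hm
      by_cases hmA : m ∈ A
      · exact Or.inl ⟨hmA, hm⟩
      · exact Or.inr hmA
    have : n ≤ (A ∩ Set.Iio n).ncard + C := by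
      calc n = (Set.Iio n).ncard := by rw [Set.ncard_eq_toFinset_card']; simp
        _ ≤ ((A ∩ Set.Iio n) ∪ Aᶜ).ncard := Set.ncard_le_ncard hsub
              ((aux_fin A n).union hfin)
        _ ≤ (A ∩ Set.Iio n).ncard + C := Set.ncard_union_le _ _
    have := (Nat.cast_le (α := ℝ)).mpr this
    push_cast at this ⊢
    linarith
  have h1 : Tendsto (fun n : ℕ => 1 - (C : ℝ) / n) atTop (nhds 1) := by
    have := tendsto_const_nhds (x := (1 : ℝ)) (f := atTop (α := ℕ))
    simpa using this.sub (tendsto_const_div_atTop_nhds_zero_nat (C : ℝ))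
  have hle : ∀ᶠ n : ℕ in atTop, (1 : ℝ) - (C : ℝ) / n ≤ ((A ∩ Set.Iio n).ncard : ℝ) / n := by
    filter_upwards [eventually_gt_atTop 0] with n hn
    have hn' : (0 : ℝ) < n := by exact_mod_cast hn
    calc (1 : ℝ) - (C : ℝ) / n = ((n : ℝ) - C) / n := by field_simp
      _ ≤ _ := div_le_div_of_nonneg_right (hge n) (le_of_lt hn')
  have : (1 : ℝ) ≤ 0 := le_of_tendsto_of_tendsto h1 hA hle
  linarith

theorem exists_subseq_tendsto_zero_of_statConv (x : ℕ → ℝ) (s : ℝ)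
    (hs : StatTendsto (fun n : ℕ => ∑ k ∈ Finset.range n, x k) s) :
    ∃ φ : ℕ → ℕ, StrictMono φ ∧ Tendsto (fun k : ℕ => x (φ k)) atTop (nhds 0) := by
  set S : ℕ → ℝ := fun n => ∑ k ∈ Finset.range n, x k with hSdef
  set T : ℕ → Set ℕ := fun k =>
    {n : ℕ | |S n - s| ≤ 1 / (k + 1) ∧ |S (n + 1) - s| ≤ 1 / (k + 1)} with hTdef
  have hT : ∀ k : ℕ, (T k).Infinite := by
    intro k
    have hε : (0 : ℝ) < 1 / (k + 1) := by positivity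
    have hneg : Negligible ({n : ℕ | |S n - s| > 1 / (k + 1)} ∪
        {n : ℕ | n + 1 ∈ {m : ℕ | |S m - s| > 1 / (k + 1)}}) :=
      negligible_union (hs _ hε) (negligible_shift (hs _ hε))
    have := negligible_compl_infinite hneg
    apply this.mono
    intro n hn
    simp only [Set.mem_compl_iff, Set.mem_union, Set.mem_setOf_eq, not_or, not_lt] at hn
    exact ⟨hn.1, hn.2⟩
  have key : ∀ k m : ℕ, ∃ n : ℕ, m < n ∧ n ∈ T k := by
    intro k m
    obtain ⟨n, hn, hm⟩ := (hT k).exists_gt m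
    exact ⟨n, hm, hn⟩
  set φ : ℕ → ℕ := fun k =>
    Nat.rec (Classical.choose (key 0 0))
      (fun k ih => Classical.choose (key (k + 1) ih)) k with hφdef
  have hφsucc : ∀ k : ℕ, φ k < φ (k + 1) ∧ φ (k + 1) ∈ T (k + 1) := fun k =>
    Classical.choose_spec (key (k + 1) (φ k))
  have hφmem : ∀ k : ℕ, φ k ∈ T k := by
    intro k
    cases k with
    | zero => exact (Classical.choose_spec (key 0 0)).2
    | succ k => exact (hφsucc k).2
  refine ⟨φ, strictMono_nat_of_lt_succ (fun k => (hφsucc k).1), ?_⟩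
  have hbound : ∀ k : ℕ, ‖x (φ k)‖ ≤ 2 / (k + 1) := by
    intro k
    obtain ⟨h1, h2⟩ := hφmem k
    have hx : x (φ k) = (S (φ k + 1) - s) - (S (φ k) - s) := by
      simp [hSdef, Finset.sum_range_succ]
    rw [Real.norm_eq_abs, hx]
    calc |(S (φ k + 1) - s) - (S (φ k) - s)| ≤ |S (φ k + 1) - s| + |S (φ k) - s| :=
          abs_sub _ _
      _ ≤ 1 / (k + 1) + 1 / (k + 1) := add_le_add h2 h1
      _ = 2 / (k + 1) := by ring
  refine squeeze_zero_norm hbound ?_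
  have h1 : Tendsto (fun k : ℕ => 1 / ((k : ℝ) + 1)) atTop (nhds 0) :=
    tendsto_one_div_add_atTop_nhds_zero_nat
  have := h1.const_mul (2 : ℝ)
  simp only [mul_zero] at this
  convert this using 2 with k
  ring
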